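/- Let (M,F) be a Finsler manifold, γ = x(t), 0 ≤ t ≤ a, a smooth curve from q = x(0) to p = x(a), and τ_a : 𝓘_qM → 𝓘_pM the induced nonlinear parallel translation. If ξ ∈ 𝔛^∞(𝓘_qM) is tangent to the holonomy group Hol(q), then its Berwald translate B_γξ := (τ_a)_* ∘ ξ ∘ τ_a⁻¹ ∈ 𝔛^∞(𝓘_pM) is tangent to the holonomy group Hol(p). -/

import Mathlib

noncomputable section

abbrev Vec (n : ℕ) := Fin n → ℝ

open Set Metric Filter MeasureTheory intervalIntegral

/-! ### Part 1: C¹ dependence of an ODE flow on the initial condition -/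

section Flow

variable {n : ℕ}

private abbrev XX (n : ℕ) := C(↥(Set.Icc (0:ℝ) 1), Vec n)

private def pj (s : ℝ) : ↥(Set.Icc (0:ℝ) 1) := Set.projIcc 0 1 zero_le_one s

private lemma continuous_pj : Continuous pj := continuous_projIcc (h := zero_le_one)

private lemma pj_coe {s : ℝ} (hs : s ∈ Set.Icc (0:ℝ) 1) : ((pj s : ↥(Set.Icc (0:ℝ) 1)) : ℝ) = s := by
  simp [pj, Set.projIcc_of_mem zero_le_one hs]

/-- the primitive operator `w ↦ (t ↦ ∫_0^t w)` on `C([0,1], ℝⁿ)`. -/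
private def primCLM (n : ℕ) : XX n →L[ℝ] XX n :=
  LinearMap.mkContinuous
    { toFun := fun w => ⟨fun t => ∫ s in (0:ℝ)..(t:ℝ), w (pj s),
        (intervalIntegral.continuous_primitive
          (fun a b => ((w.continuous.comp continuous_pj).intervalIntegrable a b)) 0).comp
          continuous_subtype_val⟩
      map_add' := fun u v => by
        refine ContinuousMap.ext fun t => ?_
        show (∫ s in (0:ℝ)..(t:ℝ), (u + v) (pj s))
            = (∫ s in (0:ℝ)..(t:ℝ), u (pj s)) + ∫ s in (0:ℝ)..(t:ℝ), v (pj s)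
        simp only [ContinuousMap.add_apply]
        exact intervalIntegral.integral_add
          ((u.continuous.comp continuous_pj).intervalIntegrable (μ := volume) _ _)
          ((v.continuous.comp continuous_pj).intervalIntegrable (μ := volume) _ _)
      map_smul' := fun r v => by
        refine ContinuousMap.ext fun t => ?_
        show (∫ s in (0:ℝ)..(t:ℝ), (r • v) (pj s)) = r • ∫ s in (0:ℝ)..(t:ℝ), v (pj s)
        simp only [ContinuousMap.smul_apply]
        exact intervalIntegral.integral_smul r _ }
    1 (fun w => by
      rw [one_mul]
      refine (ContinuousMap.norm_le _ (norm_nonneg w)).2 fun t => ?_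
      calc ‖∫ s in (0:ℝ)..(t:ℝ), w (pj s)‖ ≤ ‖w‖ * |(t:ℝ) - 0| :=
            intervalIntegral.norm_integral_le_of_norm_le_const fun s _ =>
              w.norm_coe_le_norm (pj s)
        _ ≤ ‖w‖ * 1 := by
            have h1 : |(t:ℝ) - 0| ≤ 1 := by
              have := t.2
              rw [Set.mem_Icc] at this
              rw [abs_of_nonneg (by linarith)]
              linarith
            exact mul_le_mul_of_nonneg_left h1 (norm_nonneg _)
        _ = ‖w‖ := mul_one _)

private lemma primCLM_apply (w : XX n) (t : ↥(Set.Icc (0:ℝ) 1)) :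
    primCLM n w t = ∫ s in (0:ℝ)..(t:ℝ), w (pj s) := rfl

private def constCLM (n : ℕ) : Vec n →L[ℝ] XX n :=
  LinearMap.mkContinuous
    { toFun := fun y => ContinuousMap.const _ y
      map_add' := fun u v => rfl
      map_smul' := fun r v => rfl }
    1 (fun y => by
      rw [one_mul]
      exact (ContinuousMap.norm_le _ (norm_nonneg y)).2 fun t => le_rfl)

private lemma constCLM_apply (y : Vec n) (t : ↥(Set.Icc (0:ℝ) 1)) : constCLM n y t = y := rfl

private lemma bound_of_vanish {β : Type} [SeminormedAddCommGroup β] {r : ℝ}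
    (Φ : ℝ × Vec n → β) (hΦ : Continuous Φ)
    (h0 : ∀ p : ℝ × Vec n, r < ‖p.2‖ → Φ p = 0) :
    ∃ M : ℝ, 0 ≤ M ∧ ∀ t ∈ Set.Icc (0:ℝ) 1, ∀ y, ‖Φ (t, y)‖ ≤ M := by
  obtain ⟨M, hM⟩ := (isCompact_Icc.prod (isCompact_closedBall (0 : Vec n) r)).exists_bound_of_continuousOn hΦ.continuousOn
  refine ⟨max M 0, le_max_right _ _, fun t ht y => ?_⟩
  rcases le_or_gt ‖y‖ r with h | h
  · exact (hM (t, y) ⟨ht, by simpa [mem_closedBall, dist_zero_right] using h⟩).trans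
      (le_max_left _ _)
  · simp [h0 (t, y) h, le_max_right]

private def nemMap (G : ℝ × Vec n → Vec n) (hG : Continuous G) : XX n → XX n :=
  fun u => ⟨fun t => G (↑t, u t), hG.comp (continuous_subtype_val.prodMk u.continuous)⟩

private def nemD (K : ℝ × Vec n → (Vec n →L[ℝ] Vec n)) (hK : Continuous K)
    {M : ℝ} (hM0 : 0 ≤ M) (hM : ∀ p : ℝ × Vec n, p.1 ∈ Set.Icc (0:ℝ) 1 → ‖K p‖ ≤ M)
    (u : XX n) : XX n →L[ℝ] XX n :=
  LinearMap.mkContinuous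
    { toFun := fun v => ⟨fun t => K (↑t, u t) (v t),
        (hK.comp (continuous_subtype_val.prodMk u.continuous)).clm_apply v.continuous⟩
      map_add' := fun v w => ContinuousMap.ext fun t => by
        simp [ContinuousMap.add_apply]
      map_smul' := fun r v => ContinuousMap.ext fun t => by
        simp [ContinuousMap.smul_apply] }
    M (fun v => by
      refine (ContinuousMap.norm_le _ (mul_nonneg hM0 (norm_nonneg v))).2 fun t => ?_
      calc ‖K (↑t, u t) (v t)‖ ≤ ‖K (↑t, u t)‖ * ‖v t‖ := (K _).le_opNorm _
        _ ≤ M * ‖v‖ := mul_le_mul (hM _ t.2) (v.norm_coe_le_norm t) (norm_nonneg _) hM0)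

private lemma nemD_apply (K : ℝ × Vec n → (Vec n →L[ℝ] Vec n)) (hK : Continuous K)
    {M : ℝ} (hM0 : 0 ≤ M) (hM : ∀ p : ℝ × Vec n, p.1 ∈ Set.Icc (0:ℝ) 1 → ‖K p‖ ≤ M)
    (u v : XX n) (t : ↥(Set.Icc (0:ℝ) 1)) :
    nemD K hK hM0 hM u v t = K (↑t, u t) (v t) := rfl

private lemma nemMap_hasFDerivAt (G : ℝ × Vec n → Vec n) (hG : Continuous G)
    (K : ℝ × Vec n → (Vec n →L[ℝ] Vec n)) (hK : Continuous K)
    {M L : ℝ} (hM0 : 0 ≤ M) (hM : ∀ p : ℝ × Vec n, p.1 ∈ Set.Icc (0:ℝ) 1 → ‖K p‖ ≤ M)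
    (hL0 : 0 ≤ L)
    (hKd : ∀ (t : ℝ) (x : Vec n), HasFDerivAt (fun z => G (t, z)) (K (t, x)) x)
    (hKL : ∀ t : ℝ, t ∈ Set.Icc (0:ℝ) 1 → ∀ x z : Vec n, ‖K (t, x) - K (t, z)‖ ≤ L * ‖x - z‖)
    (u : XX n) : HasFDerivAt (nemMap G hG) (nemD K hK hM0 hM u) u := by
  rw [hasFDerivAt_iff_isLittleO_nhds_zero, Asymptotics.isLittleO_iff]
  intro ε hε
  have hpos : (0:ℝ) < ε / (L + 1) := div_pos hε (by linarith)
  filter_upwards [Metric.closedBall_mem_nhds (0 : XX n) hpos] with v hv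
  rw [mem_closedBall_zero_iff] at hv
  have key : ∀ t : ↥(Set.Icc (0:ℝ) 1),
      ‖G (↑t, (u + v) t) - G (↑t, u t) - K (↑t, u t) (v t)‖ ≤ (L * ‖v‖) * ‖v‖ := by
    intro t
    set x := u t with hx
    set d := v t with hd
    have hdv : ‖d‖ ≤ ‖v‖ := v.norm_coe_le_norm t
    have hmem1 : x ∈ closedBall x ‖v‖ := mem_closedBall_self (norm_nonneg v)
    have hmem2 : x + d ∈ closedBall x ‖v‖ := by
      rw [mem_closedBall, dist_eq_norm, add_sub_cancel_left]
      exact hdv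
    have hq : ∀ z, HasFDerivAt (fun z => G (↑t, z) - K (↑t, x) z) (K (↑t, z) - K (↑t, x)) z :=
      fun z => (hKd _ z).sub (K (↑t, x)).hasFDerivAt
    have hb : ∀ z ∈ closedBall x ‖v‖,
        ‖fderiv ℝ (fun z => G (↑t, z) - K (↑t, x) z) z‖ ≤ L * ‖v‖ := by
      intro z hz
      rw [(hq z).fderiv]
      calc ‖K (↑t, z) - K (↑t, x)‖ ≤ L * ‖z - x‖ := hKL _ t.2 z x
        _ ≤ L * ‖v‖ := mul_le_mul_of_nonneg_left (mem_closedBall_iff_norm.1 hz) hL0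
    have hmv := (convex_closedBall x ‖v‖).norm_image_sub_le_of_norm_fderiv_le
      (fun z _ => (hq z).differentiableAt) hb hmem1 hmem2
    have h2 : (u + v) t = x + d := rfl
    rw [h2]
    calc ‖G (↑t, x + d) - G (↑t, x) - K (↑t, x) d‖
        = ‖(G (↑t, x + d) - K (↑t, x) (x + d)) - (G (↑t, x) - K (↑t, x) x)‖ := by
          rw [map_add]; congr 1; abel
      _ ≤ (L * ‖v‖) * ‖x + d - x‖ := hmv
      _ ≤ (L * ‖v‖) * ‖v‖ := by
          rw [add_sub_cancel_left]
          exact mul_le_mul_of_nonneg_left hdv (mul_nonneg hL0 (norm_nonneg _))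
  have hsup : ‖nemMap G hG (u + v) - nemMap G hG u - nemD K hK hM0 hM u v‖ ≤ (L * ‖v‖) * ‖v‖ := by
    refine (ContinuousMap.norm_le _
      (mul_nonneg (mul_nonneg hL0 (norm_nonneg v)) (norm_nonneg v))).2 fun t => ?_
    exact key t
  refine hsup.trans ?_
  have : L * ‖v‖ ≤ ε := by
    calc L * ‖v‖ ≤ L * (ε / (L + 1)) := mul_le_mul_of_nonneg_left hv hL0
      _ = (L / (L + 1)) * ε := by ring
      _ ≤ 1 * ε := mul_le_mul_of_nonneg_right
          (div_le_one_of_le₀ (by linarith) (by linarith)) hε.le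
      _ = ε := one_mul ε
  exact mul_le_mul_of_nonneg_right this (norm_nonneg v)

private lemma nemD_lip (K : ℝ × Vec n → (Vec n →L[ℝ] Vec n)) (hK : Continuous K)
    {M L : ℝ} (hM0 : 0 ≤ M) (hM : ∀ p : ℝ × Vec n, p.1 ∈ Set.Icc (0:ℝ) 1 → ‖K p‖ ≤ M)
    (hL0 : 0 ≤ L)
    (hKL : ∀ t : ℝ, t ∈ Set.Icc (0:ℝ) 1 → ∀ x z : Vec n, ‖K (t, x) - K (t, z)‖ ≤ L * ‖x - z‖)
    (u u' : XX n) :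
    ‖nemD K hK hM0 hM u - nemD K hK hM0 hM u'‖ ≤ L * ‖u - u'‖ := by
  refine ContinuousLinearMap.opNorm_le_bound _ (mul_nonneg hL0 (norm_nonneg _)) fun v => ?_
  refine (ContinuousMap.norm_le _
    (mul_nonneg (mul_nonneg hL0 (norm_nonneg _)) (norm_nonneg v))).2 fun t => ?_
  have h1 : (nemD K hK hM0 hM u - nemD K hK hM0 hM u') v t
      = (K (↑t, u t) - K (↑t, u' t)) (v t) := rfl
  rw [h1]
  calc ‖(K (↑t, u t) - K (↑t, u' t)) (v t)‖
      ≤ ‖K (↑t, u t) - K (↑t, u' t)‖ * ‖v t‖ := (K (↑t, u t) - K (↑t, u' t)).le_opNorm _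
    _ ≤ (L * ‖u t - u' t‖) * ‖v‖ :=
        mul_le_mul (hKL _ t.2 _ _) (v.norm_coe_le_norm t) (norm_nonneg _)
          (mul_nonneg hL0 (norm_nonneg _))
    _ ≤ L * ‖u - u'‖ * ‖v‖ := by
        have : ‖u t - u' t‖ ≤ ‖u - u'‖ := by
          have := (u - u').norm_coe_le_norm t
          simpa [ContinuousMap.sub_apply] using this
        exact mul_le_mul_of_nonneg_right (mul_le_mul_of_nonneg_left this hL0) (norm_nonneg v)

private lemma nemMap_contDiff (G : ℝ × Vec n → Vec n) (hG : Continuous G)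
    (K : ℝ × Vec n → (Vec n →L[ℝ] Vec n)) (hK : Continuous K)
    {M L : ℝ} (hM0 : 0 ≤ M) (hM : ∀ p : ℝ × Vec n, p.1 ∈ Set.Icc (0:ℝ) 1 → ‖K p‖ ≤ M)
    (hL0 : 0 ≤ L)
    (hKd : ∀ (t : ℝ) (x : Vec n), HasFDerivAt (fun z => G (t, z)) (K (t, x)) x)
    (hKL : ∀ t : ℝ, t ∈ Set.Icc (0:ℝ) 1 → ∀ x z : Vec n, ‖K (t, x) - K (t, z)‖ ≤ L * ‖x - z‖) :
    ContDiff ℝ 1 (nemMap G hG) := by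
  have hd : ∀ u, HasFDerivAt (nemMap G hG) (nemD K hK hM0 hM u) u := fun u =>
    nemMap_hasFDerivAt G hG K hK hM0 hM hL0 hKd hKL u
  rw [contDiff_one_iff_fderiv]
  refine ⟨fun u => (hd u).differentiableAt, ?_⟩
  have h1 : fderiv ℝ (nemMap G hG) = fun u => nemD K hK hM0 hM u :=
    funext fun u => (hd u).fderiv
  rw [h1]
  have hlip : LipschitzWith (Real.toNNReal L) (fun u => nemD K hK hM0 hM u) := by
    refine LipschitzWith.of_dist_le_mul fun u u' => ?_
    simp only [dist_eq_norm]
    calc ‖nemD K hK hM0 hM u - nemD K hK hM0 hM u'‖ ≤ L * ‖u - u'‖ :=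
          nemD_lip K hK hM0 hM hL0 hKL u u'
      _ ≤ (Real.toNNReal L : ℝ) * ‖u - u'‖ :=
          mul_le_mul_of_nonneg_right (Real.le_coe_toNNReal L) (norm_nonneg _)
  exact hlip.continuous

private lemma vpow_bound (K : ℝ × Vec n → (Vec n →L[ℝ] Vec n)) (hK : Continuous K)
    {M : ℝ} (hM0 : 0 ≤ M) (hM : ∀ p : ℝ × Vec n, p.1 ∈ Set.Icc (0:ℝ) 1 → ‖K p‖ ≤ M)
    (u : XX n) :
    ∀ (k : ℕ) (v : XX n) (t : ↥(Set.Icc (0:ℝ) 1)),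
      ‖((((primCLM n).comp (nemD K hK hM0 hM u)) ^ k) v) t‖
        ≤ M ^ k * (t:ℝ) ^ k / (Nat.factorial k) * ‖v‖ := by
  intro k
  induction k with
  | zero => intro v t; simpa using v.norm_coe_le_norm t
  | succ k ih =>
    intro v t
    have ht0 : (0:ℝ) ≤ (t:ℝ) := t.2.1
    have ht1 : (t:ℝ) ≤ 1 := t.2.2
    rw [pow_succ', ContinuousLinearMap.mul_apply, ContinuousLinearMap.comp_apply, primCLM_apply]
    set w := ((((primCLM n).comp (nemD K hK hM0 hM u)) ^ k) v) with hw
    set C := M ^ (k+1) / (Nat.factorial k) * ‖v‖ with hC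
    have hC0 : 0 ≤ C := by positivity
    have hbound : ∀ s ∈ Set.Ioc (0:ℝ) (t:ℝ), ‖(nemD K hK hM0 hM u w) (pj s)‖ ≤ C * s ^ k := by
      intro s hs
      have hs' : s ∈ Set.Icc (0:ℝ) 1 := ⟨hs.1.le, hs.2.trans ht1⟩
      have h2 : ‖w (pj s)‖ ≤ M ^ k * s ^ k / (Nat.factorial k) * ‖v‖ := by
        have := ih v (pj s)
        rwa [pj_coe hs'] at this
      rw [nemD_apply]
      calc ‖K (↑(pj s), u (pj s)) (w (pj s))‖
          ≤ ‖K (↑(pj s), u (pj s))‖ * ‖w (pj s)‖ := (K _).le_opNorm _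
        _ ≤ M * (M ^ k * s ^ k / (Nat.factorial k) * ‖v‖) := by
            refine mul_le_mul (hM _ (pj s).2) h2 (norm_nonneg _) hM0
        _ = C * s ^ k := by rw [hC]; ring
    have hIg : IntervalIntegrable (fun s => C * s ^ k) volume 0 (t:ℝ) :=
      (continuous_const.mul (continuous_pow k)).intervalIntegrable _ _
    have hae : ∀ᵐ s ∂(volume.restrict (Set.uIoc (0:ℝ) (t:ℝ))),
        ‖(nemD K hK hM0 hM u w) (pj s)‖ ≤ C * s ^ k := by
      have huIoc : Set.uIoc (0:ℝ) (t:ℝ) = Set.Ioc 0 (t:ℝ) := uIoc_of_le ht0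
      refine (MeasureTheory.ae_restrict_mem measurableSet_uIoc).mono fun s hs => ?_
      rw [huIoc] at hs
      exact hbound s hs
    calc ‖∫ s in (0:ℝ)..(t:ℝ), (nemD K hK hM0 hM u w) (pj s)‖
        ≤ |∫ s in (0:ℝ)..(t:ℝ), C * s ^ k| :=
          intervalIntegral.norm_integral_le_abs_of_norm_le hae hIg
      _ = C * ((t:ℝ) ^ (k+1) / (k+1)) := by
          rw [intervalIntegral.integral_const_mul, integral_pow]
          rw [zero_pow (Nat.succ_ne_zero k), sub_zero]
          rw [abs_of_nonneg (mul_nonneg hC0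
            (div_nonneg (pow_nonneg ht0 _) (by positivity)))]
      _ = M ^ (k+1) * (t:ℝ) ^ (k+1) / (Nat.factorial (k+1)) * ‖v‖ := by
          rw [hC, Nat.factorial_succ]
          push_cast
          field_simp

private lemma isUnit_one_sub_of_pow {Y : Type} [NormedRing Y] [CompleteSpace Y] (V : Y)
    {m : ℕ} (h : ‖V ^ m‖ < 1) : IsUnit (1 - V) := by
  set w := Units.oneSub (V ^ m) h with hwdef
  have hwv : (w : Y) = 1 - V ^ m := rfl
  set S := ∑ i ∈ Finset.range m, V ^ i with hS
  have h1 : S * (1 - V) = 1 - V ^ m := by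
    have hg := geom_sum_mul V m
    calc S * (1 - V) = -(S * (V - 1)) := by noncomm_ring
      _ = -(V ^ m - 1) := by rw [hS, hg]
      _ = 1 - V ^ m := by noncomm_ring
  have h2 : (1 - V) * S = 1 - V ^ m := by
    have hg := mul_geom_sum V m
    calc (1 - V) * S = -((V - 1) * S) := by noncomm_ring
      _ = -(V ^ m - 1) := by rw [hS, hg]
      _ = 1 - V ^ m := by noncomm_ring
  have hcV : Commute (1 - V) (V ^ m) :=
    (((Commute.one_left V).sub_left (Commute.refl V)).pow_right m)
  have hc : Commute (1 - V) ((w : Y)) := by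
    rw [hwv]
    exact (Commute.one_right (1 - V)).sub_right hcV
  have hcinv : Commute (1 - V) ((↑w⁻¹ : Y)) := hc.units_inv_right
  refine ⟨⟨1 - V, S * ↑w⁻¹, ?_, ?_⟩, rfl⟩
  · calc (1 - V) * (S * ↑w⁻¹) = ((1 - V) * S) * ↑w⁻¹ := by rw [mul_assoc]
      _ = (w : Y) * ↑w⁻¹ := by rw [h2, hwv]
      _ = 1 := w.mul_inv
  · calc (S * ↑w⁻¹) * (1 - V) = S * (↑w⁻¹ * (1 - V)) := by rw [mul_assoc]
      _ = S * ((1 - V) * ↑w⁻¹) := by rw [hcinv.eq]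
      _ = (S * (1 - V)) * ↑w⁻¹ := by rw [← mul_assoc]
      _ = (w : Y) * ↑w⁻¹ := by rw [h1, hwv]
      _ = 1 := w.mul_inv

private lemma fderiv_zero_of_vanish {β : Type} [NormedAddCommGroup β] [NormedSpace ℝ β] {r : ℝ}
    {Φ : ℝ × Vec n → β} (h0 : ∀ p : ℝ × Vec n, r < ‖p.2‖ → Φ p = 0)
    {p : ℝ × Vec n} (hp : r < ‖p.2‖) : fderiv ℝ Φ p = 0 := by
  have hopen : IsOpen {q : ℝ × Vec n | r < ‖q.2‖} := isOpen_lt continuous_const continuous_snd.norm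
  have hev : Φ =ᶠ[nhds p] fun _ => 0 :=
    eventually_of_mem (hopen.mem_nhds hp) fun q hq => h0 q hq
  rw [hev.fderiv_eq]
  exact fderiv_const_apply 0

set_option maxHeartbeats 1600000 in
/-- main analytic lemma: the time-one map of a globally defined flow of a smooth
(time-dependent) vector field is C¹. -/
private theorem flow_contDiff_one (F : ℝ → Vec n → Vec n)
    (hF : ContDiff ℝ (⊤ : ℕ∞) (fun p : ℝ × Vec n => F p.1 p.2))
    (τ : ℝ → Vec n → Vec n) (h0 : ∀ y, τ 0 y = y)
    (hode : ∀ y t, HasDerivAt (fun s => τ s y) (F t (τ t y)) t) :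
    ContDiff ℝ 1 (τ 1) := by
  rw [contDiff_iff_contDiffAt]
  intro y₀
  have htraj_cont : ∀ y, Continuous fun t => τ t y := fun y =>
    continuous_iff_continuousAt.2 fun t => (hode y t).continuousAt
  obtain ⟨r, hr⟩ := (isCompact_Icc (a := (0:ℝ)) (b := 1)).exists_bound_of_continuousOn
    ((htraj_cont y₀).continuousOn)
  set R := max r 0 with hR
  have hR0 : 0 ≤ R := le_max_right _ _
  have hu₀R : ∀ t ∈ Set.Icc (0:ℝ) 1, ‖τ t y₀‖ ≤ R := fun t ht => (hr t ht).trans (le_max_left _ _)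
  -- smooth cutoff
  set χ : ContDiffBump (0 : Vec n) := ⟨R + 1, R + 2, by linarith, by linarith⟩ with hχ
  set Ft : ℝ × Vec n → Vec n := fun p => χ p.2 • F p.1 p.2 with hFtdef
  have hFt : ContDiff ℝ (⊤ : ℕ∞) Ft := ContDiff.smul (χ.contDiff.comp contDiff_snd) hF
  have hFtc : Continuous Ft := hFt.continuous
  have hFt_eq : ∀ p : ℝ × Vec n, ‖p.2‖ ≤ R + 1 → Ft p = F p.1 p.2 := by
    intro p hp
    have h1 : χ p.2 = 1 := χ.one_of_mem_closedBall (by simpa [dist_zero_right] using hp)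
    simp [hFtdef, h1]
  have hFt_zero : ∀ p : ℝ × Vec n, R + 2 < ‖p.2‖ → Ft p = 0 := by
    intro p hp
    have h1 : χ p.2 = 0 := χ.zero_of_le_dist (by simpa [dist_zero_right] using hp.le)
    simp [hFtdef, h1]
  -- fibre derivative of the cutoff field
  set inR := ContinuousLinearMap.inr ℝ ℝ (Vec n) with hinR
  have hinR_norm : ‖inR‖ ≤ 1 := by
    refine ContinuousLinearMap.opNorm_le_bound _ zero_le_one fun x => ?_
    rw [one_mul]
    show ‖((0:ℝ), x)‖ ≤ ‖x‖
    rw [Prod.norm_def]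
    simp
  set Dy : ℝ × Vec n → (Vec n →L[ℝ] Vec n) := fun p => (fderiv ℝ Ft p).comp inR with hDydef
  have hFt_diff : Differentiable ℝ Ft := hFt.differentiable (by simp)
  have hDy_deriv : ∀ (t : ℝ) (x : Vec n), HasFDerivAt (fun z => Ft (t, z)) (Dy (t, x)) x :=
    fun t x => (hFt_diff (t, x)).hasFDerivAt.comp x (hasFDerivAt_prodMk_right t x)
  have hFt2 : ContDiff ℝ 2 Ft := hFt.of_le (WithTop.coe_le_coe.2 le_top)
  have hfd1 : ContDiff ℝ 1 (fderiv ℝ Ft) := hFt2.fderiv_right (by norm_num)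
  have hDy1 : ContDiff ℝ 1 Dy := by
    have hcomp : ContDiff ℝ 1 (fun L : (ℝ × Vec n) →L[ℝ] Vec n => L.comp inR) :=
      ((ContinuousLinearMap.compL ℝ (Vec n) (ℝ × Vec n) (Vec n)).flip inR).contDiff
    exact hcomp.comp hfd1
  have hDyc : Continuous Dy := hDy1.continuous
  have hDy_zero : ∀ p : ℝ × Vec n, R + 2 < ‖p.2‖ → Dy p = 0 := by
    intro p hp
    rw [hDydef]
    simp only
    rw [fderiv_zero_of_vanish hFt_zero hp, ContinuousLinearMap.zero_comp]
  obtain ⟨M, hM0, hM⟩ := bound_of_vanish Dy hDyc hDy_zero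
  have hMicc : ∀ p : ℝ × Vec n, p.1 ∈ Set.Icc (0:ℝ) 1 → ‖Dy p‖ ≤ M := fun p hp => hM p.1 hp p.2
  have hDy_diff : Differentiable ℝ Dy := (contDiff_one_iff_fderiv.1 hDy1).1
  have hfDy_cont : Continuous (fderiv ℝ Dy) := (contDiff_one_iff_fderiv.1 hDy1).2
  have hfDy_zero : ∀ p : ℝ × Vec n, R + 2 < ‖p.2‖ → fderiv ℝ Dy p = 0 :=
    fun p hp => fderiv_zero_of_vanish hDy_zero hp
  obtain ⟨L, hL0, hL⟩ := bound_of_vanish (fderiv ℝ Dy) hfDy_cont hfDy_zero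
  have hKL : ∀ t : ℝ, t ∈ Set.Icc (0:ℝ) 1 → ∀ x z : Vec n,
      ‖Dy (t, x) - Dy (t, z)‖ ≤ L * ‖x - z‖ := by
    intro t ht x z
    have hd : ∀ x : Vec n, HasFDerivAt (fun x => Dy (t, x)) ((fderiv ℝ Dy (t, x)).comp inR) x :=
      fun x => (hDy_diff (t, x)).hasFDerivAt.comp x (hasFDerivAt_prodMk_right t x)
    have hb : ∀ z : Vec n, ‖(fderiv ℝ Dy (t, z)).comp inR‖ ≤ L := by
      intro z
      calc ‖(fderiv ℝ Dy (t, z)).comp inR‖ ≤ ‖fderiv ℝ Dy (t, z)‖ * ‖inR‖ :=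
            ContinuousLinearMap.opNorm_comp_le _ _
        _ ≤ L * 1 := mul_le_mul (hL t ht z) hinR_norm (norm_nonneg _) hL0
        _ = L := mul_one L
    have := convex_univ.norm_image_sub_le_of_norm_fderiv_le
      (f := fun x => Dy (t, x)) (fun x _ => (hd x).differentiableAt)
      (fun x _ => by rw [(hd x).fderiv]; exact hb x) (Set.mem_univ z) (Set.mem_univ x)
    simpa using this
  -- the base trajectory as an element of C([0,1])
  set u₀c : XX n := ⟨fun t => τ (↑t) y₀, (htraj_cont y₀).comp continuous_subtype_val⟩ with hu₀c
  have hu₀cR : ∀ t : ↥(Set.Icc (0:ℝ) 1), ‖u₀c t‖ ≤ R := fun t => hu₀R _ t.2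
  have h𝒩 : ContDiff ℝ 1 (nemMap Ft hFtc) :=
    nemMap_contDiff Ft hFtc Dy hDyc hM0 hMicc hL0 hDy_deriv hKL
  set AD := nemD Dy hDyc hM0 hMicc u₀c with hAD
  set V := (primCLM n).comp AD with hV
  -- invertibility of 1 - V
  obtain ⟨m, hm⟩ := ((FloorSemiring.tendsto_pow_div_factorial_atTop M).eventually_lt_const
    (by norm_num : (0:ℝ) < 1)).exists
  have hVm : ‖V ^ m‖ < 1 := by
    refine lt_of_le_of_lt (ContinuousLinearMap.opNorm_le_bound _ (by positivity) fun v => ?_) hm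
    refine (ContinuousMap.norm_le _ (by positivity)).2 fun t => ?_
    refine (vpow_bound Dy hDyc hM0 hMicc u₀c m v t).trans ?_
    have ht0 : (0:ℝ) ≤ (t:ℝ) := t.2.1
    have ht1 : (t:ℝ) ≤ 1 := t.2.2
    have h1 : M ^ m * (t:ℝ) ^ m ≤ M ^ m * 1 :=
      mul_le_mul_of_nonneg_left (pow_le_one₀ ht0 ht1) (by positivity)
    rw [mul_one] at h1
    have h2 : M ^ m * (t:ℝ) ^ m / (Nat.factorial m) ≤ M ^ m / (Nat.factorial m) :=
      div_le_div_of_nonneg_right h1 (by positivity)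
    exact mul_le_mul_of_nonneg_right h2 (norm_nonneg v)
  obtain ⟨W, hW⟩ := isUnit_one_sub_of_pow V hVm
  -- the fixed-point map H and its derivative at the base point
  set constL := constCLM n with hconstL
  set fstL := ContinuousLinearMap.fst ℝ (Vec n) (XX n) with hfstL
  set sndL := ContinuousLinearMap.snd ℝ (Vec n) (XX n) with hsndL
  set f₀ : (Vec n) × XX n →L[ℝ] (Vec n) × XX n :=
    fstL.prod ((sndL - constL.comp fstL) - (primCLM n).comp (AD.comp sndL)) with hf₀
  set Binv := (↑W⁻¹ : XX n →L[ℝ] XX n) with hBinvdef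
  set g₀ : (Vec n) × XX n →L[ℝ] (Vec n) × XX n :=
    fstL.prod (Binv.comp (sndL + constL.comp fstL)) with hg₀
  have hWinvW : Binv * (1 - V) = 1 := by rw [hBinvdef, ← hW]; exact W.inv_mul
  have hWWinv : (1 - V) * Binv = 1 := by rw [hBinvdef, ← hW]; exact W.mul_inv
  have hgf : ∀ p : (Vec n) × XX n, g₀ (f₀ p) = p := by
    intro p
    refine Prod.ext rfl ?_
    show Binv ((p.2 - constL p.1 - primCLM n (AD p.2)) + constL p.1) = p.2
    have h1 : (p.2 - constL p.1 - primCLM n (AD p.2)) + constL p.1 = (1 - V) p.2 := by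
      have h2 : (1 - V) p.2 = p.2 - V p.2 := by
        rw [ContinuousLinearMap.sub_apply, ContinuousLinearMap.one_apply]
      rw [h2]
      have h3 : V p.2 = primCLM n (AD p.2) := rfl
      rw [h3]
      abel
    rw [h1]
    calc Binv ((1 - V) p.2) = (Binv * (1 - V)) p.2 := rfl
      _ = p.2 := by rw [hWinvW]; rfl
  have hfg : ∀ p : (Vec n) × XX n, f₀ (g₀ p) = p := by
    intro p
    refine Prod.ext rfl ?_
    show Binv (p.2 + constL p.1) - constL p.1 - primCLM n (AD (Binv (p.2 + constL p.1))) = p.2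
    have h3 : primCLM n (AD (Binv (p.2 + constL p.1))) = V (Binv (p.2 + constL p.1)) := rfl
    rw [h3]
    have h2 : (1 - V) (Binv (p.2 + constL p.1)) = p.2 + constL p.1 := by
      calc (1 - V) (Binv (p.2 + constL p.1)) = ((1 - V) * Binv) (p.2 + constL p.1) := rfl
        _ = p.2 + constL p.1 := by rw [hWWinv]; rfl
    have h4 : (1 - V) (Binv (p.2 + constL p.1))
        = Binv (p.2 + constL p.1) - V (Binv (p.2 + constL p.1)) := by
      rw [ContinuousLinearMap.sub_apply, ContinuousLinearMap.one_apply]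
    rw [h4] at h2
    calc Binv (p.2 + constL p.1) - constL p.1 - V (Binv (p.2 + constL p.1))
        = (Binv (p.2 + constL p.1) - V (Binv (p.2 + constL p.1))) - constL p.1 := by abel
      _ = (p.2 + constL p.1) - constL p.1 := by rw [h2]
      _ = p.2 := by abel
  set e := ContinuousLinearEquiv.equivOfInverse f₀ g₀ hgf hfg with he
  set Hmap : (Vec n) × XX n → (Vec n) × XX n :=
    fun p => (p.1, p.2 - constL p.1 - primCLM n (nemMap Ft hFtc p.2)) with hHdef
  have hHsm : ContDiff ℝ 1 Hmap :=
    contDiff_fst.prodMk ((contDiff_snd.sub (constL.contDiff.comp contDiff_fst)).sub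
      ((primCLM n).contDiff.comp (h𝒩.comp contDiff_snd)))
  set p₀ := ((y₀, u₀c) : (Vec n) × XX n) with hp₀
  have hHd : HasFDerivAt Hmap (e : (Vec n) × XX n →L[ℝ] (Vec n) × XX n) p₀ := by
    have h2 : HasFDerivAt (fun p : (Vec n) × XX n => nemMap Ft hFtc p.2)
        (AD.comp sndL) p₀ := by
      have := (nemMap_hasFDerivAt Ft hFtc Dy hDyc hM0 hMicc hL0 hDy_deriv hKL u₀c).comp p₀
        (hasFDerivAt_snd (𝕜 := ℝ) (p := p₀))
      exact this
    have h1 : HasFDerivAt Hmap f₀ p₀ :=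
      HasFDerivAt.prodMk (hasFDerivAt_fst)
        (((hasFDerivAt_snd).sub (constL.hasFDerivAt.comp p₀ hasFDerivAt_fst)).sub
          ((primCLM n).hasFDerivAt.comp p₀ h2))
    exact h1
  -- H p₀ = (y₀, 0)
  have hFTC : u₀c - constL y₀ - primCLM n (nemMap Ft hFtc u₀c) = 0 := by
    refine ContinuousMap.ext fun t => ?_
    have hint : ∫ s in (0:ℝ)..(t:ℝ), (nemMap Ft hFtc u₀c) (pj s)
        = ∫ s in (0:ℝ)..(t:ℝ), F s (τ s y₀) := by
      refine intervalIntegral.integral_congr fun s hs => ?_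
      have hs' : s ∈ Set.Icc (0:ℝ) 1 := by
        rw [Set.uIcc_of_le t.2.1] at hs
        exact ⟨hs.1, hs.2.trans t.2.2⟩
      have hps : ((pj s : ↥(Set.Icc (0:ℝ) 1)) : ℝ) = s := pj_coe hs'
      show Ft (↑(pj s), τ (↑(pj s)) y₀) = F s (τ s y₀)
      rw [hps]
      exact hFt_eq (s, τ s y₀) (by simpa using (hu₀R s hs').trans (by linarith : R ≤ R + 1))
    have hsub : ∫ s in (0:ℝ)..(t:ℝ), F s (τ s y₀) = τ (t:ℝ) y₀ - τ 0 y₀ := by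
      refine intervalIntegral.integral_eq_sub_of_hasDerivAt (fun s _ => hode y₀ s) ?_
      exact (hF.continuous.comp (continuous_id.prodMk (htraj_cont y₀))).intervalIntegrable _ _
    show u₀c t - constL y₀ t - primCLM n (nemMap Ft hFtc u₀c) t = 0
    rw [primCLM_apply, hint, hsub, constCLM_apply, h0 y₀]
    show τ (↑t) y₀ - y₀ - (τ (↑t) y₀ - y₀) = 0
    abel
  have hH₀ : Hmap p₀ = ((y₀, (0 : XX n)) : (Vec n) × XX n) := by
    refine Prod.ext rfl ?_
    exact hFTC
  -- local inverse
  have hHca : ContDiffAt ℝ 1 Hmap p₀ := hHsm.contDiffAt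
  set Φinv := hHca.localInverse hHd one_ne_zero with hΦdef
  have hloc : ContDiffAt ℝ 1 Φinv (Hmap p₀) := hHca.to_localInverse hHd one_ne_zero
  have hfix : Φinv (Hmap p₀) = p₀ := hHca.localInverse_apply_image hHd one_ne_zero
  have hrinv : ∀ᶠ q in nhds (Hmap p₀), Hmap (Φinv q) = q :=
    (hHca.hasStrictFDerivAt' hHd one_ne_zero).eventually_right_inverse
  set Ψ : Vec n → XX n := fun y => (Φinv (y, 0)).2 with hΨ
  have hι : ContDiff ℝ 1 (fun y : Vec n => ((y, (0 : XX n)) : (Vec n) × XX n)) :=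
    contDiff_id.prodMk contDiff_const
  have hΨca : ContDiffAt ℝ 1 Ψ y₀ := by
    have h1 : ContDiffAt ℝ 1 Φinv ((y₀, (0 : XX n)) : (Vec n) × XX n) := by
      rw [← hH₀]; exact hloc
    exact contDiff_snd.contDiffAt.comp _ (h1.comp y₀ hι.contDiffAt)
  have hΨy₀ : Ψ y₀ = u₀c := by
    have h1 : Φinv ((y₀, (0 : XX n)) : (Vec n) × XX n) = p₀ := by rw [← hH₀]; exact hfix
    show (Φinv (y₀, 0)).2 = u₀c
    rw [h1]
  have hev1 : ∀ᶠ y in nhds y₀, Hmap (Φinv (y, (0 : XX n))) = (y, (0 : XX n)) := by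
    have hcont : ContinuousAt (fun y : Vec n => ((y, (0 : XX n)) : (Vec n) × XX n)) y₀ :=
      (hι.continuous).continuousAt
    rw [hH₀] at hrinv
    exact hcont.eventually hrinv
  have hev2 : ∀ᶠ y in nhds y₀, ‖Ψ y - u₀c‖ < 1/2 := by
    have h1 : ContinuousAt Ψ y₀ := hΨca.continuousAt
    have h2 := h1.preimage_mem_nhds (Metric.ball_mem_nhds (Ψ y₀) (by norm_num : (0:ℝ) < 1/2))
    filter_upwards [h2] with y hy
    have := mem_ball.1 hy
    rw [hΨy₀] at this
    rwa [dist_eq_norm] at this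
  -- identification with the flow on a neighbourhood of y₀
  have hfinal : (fun y => τ 1 y) =ᶠ[nhds y₀]
      fun y => Ψ y ⟨1, by norm_num⟩ := by
    filter_upwards [hev1, hev2] with y h1 h2
    have hfst : (Φinv ((y, (0 : XX n)) : (Vec n) × XX n)).1 = y := congrArg Prod.fst h1
    have hsnd : (Φinv (y, 0)).2 - constL (Φinv (y, 0)).1
        - primCLM n (nemMap Ft hFtc (Φinv (y, 0)).2) = (0 : XX n) := congrArg Prod.snd h1
    rw [hfst] at hsnd
    have hInteq : Ψ y = constL y + primCLM n (nemMap Ft hFtc (Ψ y)) := by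
      have := hsnd
      rwa [sub_sub, sub_eq_zero] at this
    have hInt : ∀ t : ↥(Set.Icc (0:ℝ) 1),
        Ψ y t = y + ∫ s in (0:ℝ)..(t:ℝ), Ft (↑(pj s), Ψ y (pj s)) := by
      intro t
      have h3 := congrArg (fun u : XX n => u t) hInteq
      simp only [ContinuousMap.add_apply] at h3
      rw [h3, constCLM_apply, primCLM_apply]
      rfl
    have hnormΨ : ∀ t : ↥(Set.Icc (0:ℝ) 1), ‖Ψ y t‖ ≤ R + 1/2 := by
      intro t
      have h3 : ‖Ψ y t - u₀c t‖ ≤ ‖Ψ y - u₀c‖ := by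
        have := (Ψ y - u₀c).norm_coe_le_norm t
        simpa [ContinuousMap.sub_apply] using this
      calc ‖Ψ y t‖ = ‖u₀c t + (Ψ y t - u₀c t)‖ := by congr 1; abel
        _ ≤ ‖u₀c t‖ + ‖Ψ y t - u₀c t‖ := norm_add_le _ _
        _ ≤ R + 1/2 := add_le_add (hu₀cR t) (h3.trans h2.le)
    set w : ℝ → Vec n := fun t => Ψ y (pj t) with hwdef
    have hw_cont : Continuous w := (Ψ y).continuous.comp continuous_pj
    set q : ℝ → Vec n := fun s => Ft (↑(pj s), Ψ y (pj s)) with hq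
    have hq_cont : Continuous q := hFtc.comp
      ((continuous_subtype_val.comp continuous_pj).prodMk ((Ψ y).continuous.comp continuous_pj))
    have hP : ∀ r : ℝ, HasDerivAt (fun r' => y + ∫ s in (0:ℝ)..r', q s) (q r) r := fun r =>
      (intervalIntegral.integral_hasDerivAt_right (hq_cont.intervalIntegrable _ _)
        (hq_cont.stronglyMeasurableAtFilter _ _) hq_cont.continuousAt).const_add y
    have hwP : ∀ r ∈ Set.Icc (0:ℝ) 1, w r = y + ∫ s in (0:ℝ)..r, q s := by
      intro r hr
      show Ψ y (pj r) = _
      rw [hInt (pj r), pj_coe hr]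
    obtain ⟨r2, hr2⟩ := (isCompact_Icc (a := (0:ℝ)) (b := 1)).exists_bound_of_continuousOn
      ((htraj_cont y).continuousOn)
    set Q := max (R + 1) (max r2 0) with hQ
    have hQ1 : R + 1 ≤ Q := le_max_left _ _
    have hQ2 : r2 ≤ Q := le_trans (le_max_left _ _) (le_max_right _ _)
    set DyF : ℝ × Vec n → (Vec n →L[ℝ] Vec n) := fun p =>
      (fderiv ℝ (fun p : ℝ × Vec n => F p.1 p.2) p).comp inR with hDyFdef
    have hF_diff : Differentiable ℝ (fun p : ℝ × Vec n => F p.1 p.2) :=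
      hF.differentiable (by simp)
    have hDyF_deriv : ∀ (t : ℝ) (x : Vec n), HasFDerivAt (fun z => F t z) (DyF (t, x)) x :=
      fun t x => (hF_diff (t, x)).hasFDerivAt.comp x (hasFDerivAt_prodMk_right t x)
    have hDyF_cont : Continuous DyF := by
      have h5 : ContDiff ℝ 1 (fderiv ℝ (fun p : ℝ × Vec n => F p.1 p.2)) :=
        (hF.of_le (WithTop.coe_le_coe.2 le_top : (2:WithTop ℕ∞) ≤ _)).fderiv_right
          (by norm_num)
      exact (((ContinuousLinearMap.compL ℝ (Vec n) (ℝ × Vec n) (Vec n)).flip inR).continuous).comp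
        h5.continuous
    obtain ⟨KQ, hKQ⟩ := (isCompact_Icc.prod
      (isCompact_closedBall (0 : Vec n) Q)).exists_bound_of_continuousOn hDyF_cont.continuousOn
    have hKQ' : ∀ t ∈ Set.Icc (0:ℝ) 1, ∀ z ∈ closedBall (0 : Vec n) Q,
        ‖DyF (t, z)‖ ≤ max KQ 0 := fun t ht z hz => (hKQ (t, z) ⟨ht, hz⟩).trans (le_max_left _ _)
    set Fc : ℝ → Vec n → Vec n := fun t z => F (↑(pj t)) z with hFc
    have hlips : ∀ t : ℝ, LipschitzOnWith (Real.toNNReal (max KQ 0)) (Fc t)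
        (closedBall (0 : Vec n) Q) := by
      intro t
      rw [lipschitzOnWith_iff_dist_le_mul]
      intro x hx z hz
      rw [dist_eq_norm, dist_eq_norm]
      have ht' : ((pj t : ↥(Set.Icc (0:ℝ) 1)) : ℝ) ∈ Set.Icc (0:ℝ) 1 := (pj t).2
      have hmv := (convex_closedBall (0 : Vec n) Q).norm_image_sub_le_of_norm_fderiv_le
        (f := fun z => F (↑(pj t)) z)
        (fun z _ => (hDyF_deriv _ z).differentiableAt)
        (fun z hzz => by rw [(hDyF_deriv _ z).fderiv]; exact hKQ' _ ht' z hzz) hz hx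
      rw [Real.coe_toNNReal _ (le_max_right KQ 0)]
      exact hmv
    have hf' : ∀ t ∈ Set.Ico (0:ℝ) 1,
        HasDerivWithinAt (fun t => τ t y) (Fc t (τ t y)) (Set.Ici t) t := by
      intro t ht
      have hder := (hode y t).hasDerivWithinAt (s := Set.Ici t)
      have heq2 : Fc t (τ t y) = F t (τ t y) := by
        show F (↑(pj t)) (τ t y) = F t (τ t y)
        rw [pj_coe ⟨ht.1, ht.2.le⟩]
      rw [heq2]
      exact hder
    have hfs : ∀ t ∈ Set.Ico (0:ℝ) 1, τ t y ∈ closedBall (0 : Vec n) Q := by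
      intro t ht
      rw [mem_closedBall_zero_iff]
      exact (hr2 t ⟨ht.1, ht.2.le⟩).trans hQ2
    have hwQ : ∀ t ∈ Set.Ico (0:ℝ) 1, w t ∈ closedBall (0 : Vec n) Q := by
      intro t ht
      rw [mem_closedBall_zero_iff]
      exact (hnormΨ (pj t)).trans (by linarith)
    have hw' : ∀ t ∈ Set.Ico (0:ℝ) 1, HasDerivWithinAt w (Fc t (w t)) (Set.Ici t) t := by
      intro t ht
      have hmem : Set.Icc (0:ℝ) 1 ∈ nhdsWithin t (Set.Ici t) := by
        refine mem_nhdsWithin.2 ⟨Set.Iio 1, isOpen_Iio, ht.2, ?_⟩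
        rintro s ⟨hs1, hs2⟩
        exact ⟨le_trans ht.1 hs2, le_of_lt hs1⟩
      have hd : HasDerivWithinAt w (q t) (Set.Ici t) t := by
        refine ((hP t).hasDerivWithinAt).congr_of_eventuallyEq ?_ ?_
        · exact eventually_of_mem hmem fun r hr => hwP r hr
        · exact hwP t ⟨ht.1, ht.2.le⟩
      have heq3 : q t = Fc t (w t) := by
        show Ft (↑(pj t), Ψ y (pj t)) = F (↑(pj t)) (Ψ y (pj t))
        exact hFt_eq (↑(pj t), Ψ y (pj t)) ((hnormΨ (pj t)).trans (by linarith))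
      rw [← heq3]
      exact hd
    have ha : τ 0 y = w 0 := by
      rw [h0 y, hwP 0 ⟨le_rfl, zero_le_one⟩, intervalIntegral.integral_same, add_zero]
    have heqn := ODE_solution_unique_of_mem_Icc_right
      (v := Fc) (s := fun _ => closedBall (0 : Vec n) Q) (K := Real.toNNReal (max KQ 0))
      (fun t _ => hlips t) ((htraj_cont y).continuousOn) hf' hfs
      hw_cont.continuousOn hw' hwQ ha
    have h1' : τ 1 y = w 1 := heqn ⟨zero_le_one, le_rfl⟩
    rw [h1']
    show Ψ y (pj 1) = Ψ y ⟨1, by norm_num⟩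
    congr 1
    exact Subtype.ext (pj_coe ⟨zero_le_one, le_rfl⟩)
  have h6 := (((ContinuousMap.evalCLM ℝ (⟨1, by norm_num⟩ :
    ↥(Set.Icc (0:ℝ) 1))).contDiff (𝕜 := ℝ)).contDiffAt).comp y₀ hΨca
  have hgoal : ContDiffAt ℝ 1 (fun y => Ψ y ⟨1, by norm_num⟩) y₀ :=
    h6.congr_of_eventuallyEq (Filter.Eventually.of_forall fun y => rfl)
  exact hgoal.congr_of_eventuallyEq hfinal

end Flow

/-! ### Part 2: conjugation of holonomy by parallel translation -/

/-- `τ s` is the nonlinear parallel translation from `c 0` to `c s` along the curve `c`,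
with respect to the nonlinear connection coefficients `N = (G^i_j)`:
the translated vectors `t ↦ τ t y₀` solve `dX^i/dt + G^i_j(c(t), X(t)) ċ^j(t) = 0`. -/
def IsParallelTransport {n : ℕ} (N : Vec n → Vec n → Fin n → Fin n → ℝ)
    (c : ℝ → Vec n) (τ : ℝ → Vec n → Vec n) : Prop :=
  (∀ y0, τ 0 y0 = y0) ∧
  ∀ y0 t, HasDerivAt (fun s => τ s y0)
    (fun i => -(∑ j, N (c t) (τ t y0) i j * deriv c t j)) t

/-- The parallel translations along smooth loops based at `p`. -/
def loopTranslations {n : ℕ} (N : Vec n → Vec n → Fin n → Fin n → ℝ)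
    (p : Vec n) : Set (Function.End (Vec n)) :=
  {φ | ∃ (c : ℝ → Vec n) (τ : ℝ → Vec n → Vec n),
    ContDiff ℝ (⊤ : ℕ∞) c ∧ c 0 = p ∧ c 1 = p ∧
    IsParallelTransport N c τ ∧ φ = τ 1}

/-- The holonomy group at `p`: the group of transformations of the fibre generated by
parallel translations along (piecewise smooth) loops at `p`, realized as the closure of
the set of loop translations under composition. -/
def holonomy {n : ℕ} (N : Vec n → Vec n → Fin n → Fin n → ℝ)
    (p : Vec n) : Submonoid (Function.End (Vec n)) :=
  Submonoid.closure (loopTranslations N p)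

/-- A vector field `ξ` on the fibre over `p` is tangent to a set `S` of transformations of the
fibre if there is a `C¹` one-parameter family `{φ_t ∈ S}` with `φ₀ = Id` and
`∂φ_t/∂t|₀ = ξ`. -/
def IsTangentTo {n : ℕ} (S : Set (Function.End (Vec n))) (ξ : Vec n → Vec n) : Prop :=
  ∃ ε > (0 : ℝ), ∃ φ : ℝ → Vec n → Vec n,
    ContDiffOn ℝ 1 (fun q : ℝ × Vec n => φ q.1 q.2) ({t | |t| < ε} ×ˢ Set.univ) ∧
    (∀ t, |t| < ε → (φ t : Function.End (Vec n)) ∈ S) ∧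
    φ 0 = id ∧
    ∀ y, HasDerivAt (fun t => φ t y) (ξ y) 0

section Glue

variable {n : ℕ} {N : Vec n → Vec n → Fin n → Fin n → ℝ} {c : ℝ → Vec n}
  {τ : ℝ → Vec n → Vec n} {τinv : Vec n → Vec n}

private lemma piecewise_deriv_case {κ : ℝ → Vec n} (hκ : ContDiff ℝ (⊤ : ℕ∞) κ)
    {ρ : ℝ → Vec n → Vec n}
    (hρ : ∀ y0 t, HasDerivAt (fun s => ρ s y0)
      (fun i => -(∑ j, N (κ t) (ρ t y0) i j * deriv κ t j)) t)
    {g : ℝ → ℝ} (hg : ContDiff ℝ (⊤ : ℕ∞) g) (z : Vec n) (t : ℝ)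
    {Γc Sgc : ℝ → Vec n}
    (hΓ : Γc =ᶠ[nhds t] fun s => κ (g s)) (hSg : Sgc =ᶠ[nhds t] fun s => ρ (g s) z) :
    HasDerivAt Sgc (fun i => -(∑ j, N (Γc t) (Sgc t) i j * deriv Γc t j)) t := by
  have hgd : HasDerivAt g (deriv g t) t := (hg.differentiable (by simp) t).hasDerivAt
  have hρd : HasDerivAt (fun r => ρ r z)
      (fun i => -(∑ j, N (κ (g t)) (ρ (g t) z) i j * deriv κ (g t) j)) (g t) := hρ z (g t)
  have h1 : HasDerivAt (fun s => ρ (g s) z)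
      (deriv g t • fun i => -(∑ j, N (κ (g t)) (ρ (g t) z) i j * deriv κ (g t) j)) t :=
    hρd.scomp t hgd
  have hκd : HasDerivAt κ (deriv κ (g t)) (g t) := (hκ.differentiable (by simp) (g t)).hasDerivAt
  have h2 : HasDerivAt (fun s => κ (g s)) (deriv g t • deriv κ (g t)) t := hκd.scomp t hgd
  have hΓd : deriv Γc t = deriv g t • deriv κ (g t) := by rw [hΓ.deriv_eq]; exact h2.deriv
  have hΓt : Γc t = κ (g t) := hΓ.self_of_nhds
  have hSgt : Sgc t = ρ (g t) z := hSg.self_of_nhds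
  have h3 : HasDerivAt Sgc
      (deriv g t • fun i => -(∑ j, N (κ (g t)) (ρ (g t) z) i j * deriv κ (g t) j)) t :=
    h1.congr_of_eventuallyEq hSg
  have h4 : (deriv g t • fun i => -(∑ j, N (κ (g t)) (ρ (g t) z) i j * deriv κ (g t) j))
      = fun i => -(∑ j, N (Γc t) (Sgc t) i j * deriv Γc t j) := by
    rw [hΓt, hSgt, hΓd]
    funext i
    simp only [Pi.smul_apply, smul_eq_mul]
    rw [mul_neg, Finset.mul_sum]
    congr 1
    refine Finset.sum_congr rfl fun j _ => ?_
    ring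
  exact h4 ▸ h3

private lemma piecewise_deriv_const {Γc Sgc : ℝ → Vec n} (t : ℝ) {v w : Vec n}
    (hΓ : Γc =ᶠ[nhds t] fun _ => v) (hSg : Sgc =ᶠ[nhds t] fun _ => w) :
    HasDerivAt Sgc (fun i => -(∑ j, N (Γc t) (Sgc t) i j * deriv Γc t j)) t := by
  have h1 : HasDerivAt Sgc (0 : Vec n) t := (hasDerivAt_const t w).congr_of_eventuallyEq hSg
  have h2 : (fun i => -(∑ j, N (Γc t) (Sgc t) i j * deriv Γc t j)) = (0 : Vec n) := by
    have hd : deriv Γc t = 0 := by rw [hΓ.deriv_eq, deriv_const]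
    funext i
    simp [hd]
  exact h2 ▸ h1

/-- conjugation by a generator: the loop `c⁻¹ ⋆ c' ⋆ c` realizes `τ₁ ∘ φ ∘ τ₁⁻¹`. -/
private lemma conj_generator_mem
    (hc : ContDiff ℝ (⊤ : ℕ∞) c) (hτ : IsParallelTransport N c τ)
    (hτinv : ∀ y, τinv (τ 1 y) = y ∧ τ 1 (τinv y) = y)
    {φ : Function.End (Vec n)} (hφ : φ ∈ loopTranslations N (c 0)) :
    ((fun y => τ 1 (φ (τinv y))) : Function.End (Vec n)) ∈ holonomy N (c 1) := by
  obtain ⟨c', τ', hc', h0', h1', hτ', rfl⟩ := hφ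
  set θ := Real.smoothTransition with hθ
  set g₁ : ℝ → ℝ := fun s => 1 - θ (9 * s - 1) with hg₁def
  set g₂ : ℝ → ℝ := fun s => θ (9 * s - 4) with hg₂def
  set g₃ : ℝ → ℝ := fun s => θ (9 * s - 7) with hg₃def
  have hlin : ∀ a : ℝ, ContDiff ℝ (⊤ : ℕ∞) (fun s : ℝ => 9 * s - a) := fun a =>
    (contDiff_const.mul contDiff_id).sub contDiff_const
  have hg₁ : ContDiff ℝ (⊤ : ℕ∞) g₁ :=
    contDiff_const.sub (Real.smoothTransition.contDiff.comp (hlin 1))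
  have hg₂ : ContDiff ℝ (⊤ : ℕ∞) g₂ := Real.smoothTransition.contDiff.comp (hlin 4)
  have hg₃ : ContDiff ℝ (⊤ : ℕ∞) g₃ := Real.smoothTransition.contDiff.comp (hlin 7)
  set Γ : ℝ → Vec n := fun s =>
    if s < 1/3 then c (g₁ s) else if s < 2/3 then c' (g₂ s) else c (g₃ s) with hΓdef
  set Sg : ℝ → Vec n → Vec n := fun s y =>
    if s < 1/3 then τ (g₁ s) (τinv y) else if s < 2/3 then τ' (g₂ s) (τinv y)
      else τ (g₃ s) (τ' 1 (τinv y)) with hSgdef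
  -- region facts
  have hfstΓ : ∀ t : ℝ, t < 1/3 → Γ =ᶠ[nhds t] fun s => c (g₁ s) := fun t ht =>
    eventually_of_mem (Iio_mem_nhds ht) fun s hs => if_pos hs
  have hfstSg : ∀ (y) (t : ℝ), t < 1/3 → (fun s => Sg s y) =ᶠ[nhds t] fun s => τ (g₁ s) (τinv y) :=
    fun y t ht => eventually_of_mem (Iio_mem_nhds ht) fun s hs => if_pos hs
  have hmidΓ : ∀ t : ℝ, 1/3 < t → t < 2/3 → Γ =ᶠ[nhds t] fun s => c' (g₂ s) := fun t h1 h2 =>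
    eventually_of_mem (Ioo_mem_nhds h1 h2) fun s hs => by
      simp only [hΓdef]
      rw [if_neg (not_lt.2 hs.1.le), if_pos hs.2]
  have hmidSg : ∀ (y) (t : ℝ), 1/3 < t → t < 2/3 →
      (fun s => Sg s y) =ᶠ[nhds t] fun s => τ' (g₂ s) (τinv y) := fun y t h1 h2 =>
    eventually_of_mem (Ioo_mem_nhds h1 h2) fun s hs => by
      simp only [hSgdef]
      rw [if_neg (not_lt.2 hs.1.le), if_pos hs.2]
  have hlstΓ : ∀ t : ℝ, 2/3 < t → Γ =ᶠ[nhds t] fun s => c (g₃ s) := fun t ht =>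
    eventually_of_mem (Ioi_mem_nhds ht) fun s hs => by
      simp only [hΓdef]
      rw [if_neg (by push_neg; linarith [mem_Ioi.1 hs]), if_neg (not_lt.2 (le_of_lt hs))]
  have hlstSg : ∀ (y) (t : ℝ), 2/3 < t →
      (fun s => Sg s y) =ᶠ[nhds t] fun s => τ (g₃ s) (τ' 1 (τinv y)) := fun y t ht =>
    eventually_of_mem (Ioi_mem_nhds ht) fun s hs => by
      simp only [hSgdef]
      rw [if_neg (by push_neg; linarith [mem_Ioi.1 hs]), if_neg (not_lt.2 (le_of_lt hs))]
  -- values of g's on overlap regions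
  have hg₁one : ∀ s : ℝ, s ≤ 1/9 → g₁ s = 1 := fun s hs => by
    simp only [hg₁def, hθ]
    rw [Real.smoothTransition.zero_of_nonpos (by linarith)]
    ring
  have hg₁zero : ∀ s : ℝ, 2/9 ≤ s → g₁ s = 0 := fun s hs => by
    simp only [hg₁def, hθ]
    rw [Real.smoothTransition.one_of_one_le (by linarith)]
    ring
  have hg₂zero : ∀ s : ℝ, s ≤ 4/9 → g₂ s = 0 := fun s hs => by
    simp only [hg₂def, hθ]
    exact Real.smoothTransition.zero_of_nonpos (by linarith)
  have hg₂one : ∀ s : ℝ, 5/9 ≤ s → g₂ s = 1 := fun s hs => by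
    simp only [hg₂def, hθ]
    exact Real.smoothTransition.one_of_one_le (by linarith)
  have hg₃zero : ∀ s : ℝ, s ≤ 7/9 → g₃ s = 0 := fun s hs => by
    simp only [hg₃def, hθ]
    exact Real.smoothTransition.zero_of_nonpos (by linarith)
  have hg₃one : ∀ s : ℝ, 8/9 ≤ s → g₃ s = 1 := fun s hs => by
    simp only [hg₃def, hθ]
    exact Real.smoothTransition.one_of_one_le (by linarith)
  -- first overlap : on (2/9, 4/9) everything is constant
  have hov1Γ : ∀ t : ℝ, 2/9 < t → t < 4/9 → Γ =ᶠ[nhds t] fun _ => c 0 := fun t h1 h2 =>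
    eventually_of_mem (Ioo_mem_nhds h1 h2) fun s hs => by
      simp only [hΓdef]
      rcases lt_or_ge s (1/3) with h | h
      · rw [if_pos h, hg₁zero s hs.1.le]
      · rw [if_neg (not_lt.2 h), if_pos (by linarith [hs.2]), hg₂zero s hs.2.le, h0']
  have hov1Sg : ∀ (y) (t : ℝ), 2/9 < t → t < 4/9 →
      (fun s => Sg s y) =ᶠ[nhds t] fun _ => τinv y := fun y t h1 h2 =>
    eventually_of_mem (Ioo_mem_nhds h1 h2) fun s hs => by
      simp only [hSgdef]
      rcases lt_or_ge s (1/3) with h | h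
      · rw [if_pos h, hg₁zero s hs.1.le, hτ.1]
      · rw [if_neg (not_lt.2 h), if_pos (by linarith [hs.2]), hg₂zero s hs.2.le, hτ'.1]
  -- second overlap : on (5/9, 7/9) everything is constant
  have hov2Γ : ∀ t : ℝ, 5/9 < t → t < 7/9 → Γ =ᶠ[nhds t] fun _ => c 0 := fun t h1 h2 =>
    eventually_of_mem (Ioo_mem_nhds h1 h2) fun s hs => by
      simp only [hΓdef]
      rcases lt_or_ge s (2/3) with h | h
      · rw [if_neg (by push_neg; linarith [hs.1]), if_pos h, hg₂one s hs.1.le, h1']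
      · rw [if_neg (by push_neg; linarith [hs.1]), if_neg (not_lt.2 h), hg₃zero s hs.2.le]
  have hov2Sg : ∀ (y) (t : ℝ), 5/9 < t → t < 7/9 →
      (fun s => Sg s y) =ᶠ[nhds t] fun _ => τ' 1 (τinv y) := fun y t h1 h2 =>
    eventually_of_mem (Ioo_mem_nhds h1 h2) fun s hs => by
      simp only [hSgdef]
      rcases lt_or_ge s (2/3) with h | h
      · rw [if_neg (by push_neg; linarith [hs.1]), if_pos h, hg₂one s hs.1.le]
      · rw [if_neg (by push_neg; linarith [hs.1]), if_neg (not_lt.2 h), hg₃zero s hs.2.le, hτ.1]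
  -- smoothness of Γ
  have hΓsmooth : ContDiff ℝ (⊤ : ℕ∞) Γ := by
    rw [contDiff_iff_contDiffAt]
    intro t
    rcases lt_or_ge t (1/3) with h | h
    · exact ((hc.comp hg₁).contDiffAt).congr_of_eventuallyEq (hfstΓ t h)
    rcases lt_or_ge t (4/9) with h2 | h2
    · exact contDiffAt_const.congr_of_eventuallyEq (hov1Γ t (by linarith) h2)
    rcases lt_or_ge t (2/3) with h3 | h3
    · exact ((hc'.comp hg₂).contDiffAt).congr_of_eventuallyEq (hmidΓ t (by linarith) h3)
    rcases lt_or_ge t (7/9) with h4 | h4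
    · exact contDiffAt_const.congr_of_eventuallyEq (hov2Γ t (by linarith) h4)
    · exact ((hc.comp hg₃).contDiffAt).congr_of_eventuallyEq (hlstΓ t (by linarith))
  -- endpoints
  have hΓ0 : Γ 0 = c 1 := by
    simp only [hΓdef]
    rw [if_pos (by norm_num), hg₁one 0 (by norm_num)]
  have hΓ1 : Γ 1 = c 1 := by
    simp only [hΓdef]
    rw [if_neg (by norm_num), if_neg (by norm_num), hg₃one 1 (by norm_num)]
  -- parallel transport property
  have hSgtrans : IsParallelTransport N Γ Sg := by
    constructor
    · intro y
      simp only [hSgdef]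
      rw [if_pos (by norm_num), hg₁one 0 (by norm_num)]
      exact (hτinv y).2
    · intro y t
      rcases lt_or_ge t (1/3) with h | h
      · exact piecewise_deriv_case hc hτ.2 hg₁ (τinv y) t (hfstΓ t h) (hfstSg y t h)
      rcases lt_or_ge t (4/9) with h2 | h2
      · exact piecewise_deriv_const t (hov1Γ t (by linarith) h2) (hov1Sg y t (by linarith) h2)
      rcases lt_or_ge t (2/3) with h3 | h3
      · exact piecewise_deriv_case hc' hτ'.2 hg₂ (τinv y) t
          (hmidΓ t (by linarith) h3) (hmidSg y t (by linarith) h3)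
      rcases lt_or_ge t (7/9) with h4 | h4
      · exact piecewise_deriv_const t (hov2Γ t (by linarith) h4) (hov2Sg y t (by linarith) h4)
      · exact piecewise_deriv_case hc hτ.2 hg₃ (τ' 1 (τinv y)) t
          (hlstΓ t (by linarith)) (hlstSg y t (by linarith))
  -- conclude
  refine Submonoid.subset_closure ⟨Γ, Sg, hΓsmooth, hΓ0, hΓ1, hSgtrans, ?_⟩
  funext y
  show τ 1 (τ' 1 (τinv y)) = Sg 1 y
  simp only [hSgdef]
  rw [if_neg (by norm_num), if_neg (by norm_num), hg₃one 1 (by norm_num)]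

end Glue

/-- Lemma on conjugation by parallel translation: if `ξ` is a vector field on
the indicatrix at `q = c 0` tangent to the holonomy group `Hol(q)`, then its Berwald
translate `B_γ ξ = (τ₁)_* ∘ ξ ∘ τ₁⁻¹` along the curve `γ = c` to `p = c 1` is tangent to the
holonomy group `Hol(p)`. -/
theorem berwald_translate_tangent {n : ℕ}
    (N : Vec n → Vec n → Fin n → Fin n → ℝ)
    (hN : ContDiff ℝ (⊤ : ℕ∞) (fun q : Vec n × Vec n => (fun i j => N q.1 q.2 i j :
      Fin n → Fin n → ℝ)))
    (c : ℝ → Vec n) (hc : ContDiff ℝ (⊤ : ℕ∞) c)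
    (τ : ℝ → Vec n → Vec n) (hτ : IsParallelTransport N c τ)
    (τinv : Vec n → Vec n)
    (hτinv : ∀ y, τinv (τ 1 y) = y ∧ τ 1 (τinv y) = y)
    (ξ : Vec n → Vec n)
    (hξ : IsTangentTo (holonomy N (c 0) : Set (Function.End (Vec n))) ξ) :
    IsTangentTo (holonomy N (c 1) : Set (Function.End (Vec n)))
      (fun y => fderiv ℝ (τ 1) (τinv y) (ξ (τinv y))) := by
  classical
  -- the vector field F along c
  set F : ℝ → Vec n → Vec n := fun t z => (fun i => -(∑ j, N (c t) z i j * deriv c t j)) with hFdef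
  have hderivc : ContDiff ℝ (⊤ : ℕ∞) (deriv c) := (contDiff_infty_iff_deriv.mp hc).2
  have hF : ContDiff ℝ (⊤ : ℕ∞) (fun p : ℝ × Vec n => F p.1 p.2) := by
    rw [hFdef]
    refine contDiff_pi.2 fun i => ContDiff.neg ?_
    refine ContDiff.sum fun j _ => ContDiff.mul ?_ ?_
    · exact (contDiff_pi.1 (contDiff_pi.1 hN i) j).comp
        ((hc.comp contDiff_fst).prodMk contDiff_snd)
    · exact (contDiff_pi.1 hderivc j).comp contDiff_fst
  -- τ 1 is C¹
  have hτ1 : ContDiff ℝ 1 (τ 1) :=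
    flow_contDiff_one F hF τ hτ.1 (fun y t => hτ.2 y t)
  -- τinv is C¹ (it is the time-one map of the reversed flow)
  have hτinv1 : ContDiff ℝ 1 τinv := by
    have : τinv = (fun s y => τ (1 - s) (τinv y)) 1 := by
      funext y; simp [hτ.1 (τinv y)]
    rw [this]
    refine flow_contDiff_one (fun t z => -F (1 - t) z) ?_ (fun s y => τ (1 - s) (τinv y)) (fun y => by simpa using (hτinv y).2) ?_
    · exact (hF.comp ((contDiff_const.sub contDiff_fst).prodMk contDiff_snd)).neg
    · intro y t
      have h1 : HasDerivAt (fun s => τ s (τinv y))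
          (F (1 - t) (τ (1 - t) (τinv y))) (1 - t) := hτ.2 (τinv y) (1 - t)
      have h2 : HasDerivAt (fun s : ℝ => 1 - s) (-1) t := by
        simpa using (hasDerivAt_id t).const_sub 1
      have := h1.scomp t h2
      simpa [Function.comp_def] using this
  -- the conjugation monoid homomorphism
  have hconj : ∀ f : Function.End (Vec n), f ∈ holonomy N (c 0) →
      ((fun y => τ 1 (f (τinv y))) : Function.End (Vec n)) ∈ holonomy N (c 1) := by
    let conjHom : Function.End (Vec n) →* Function.End (Vec n) :=
      { toFun := fun f => ((fun y => τ 1 (f (τinv y))) : Function.End (Vec n))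
        map_one' := funext fun y => (hτinv y).2
        map_mul' := fun g g' => funext fun y => by
          show τ 1 (g (g' (τinv y))) = τ 1 (g (τinv (τ 1 (g' (τinv y)))))
          rw [(hτinv _).1] }
    intro f hf
    have h2 : Submonoid.map conjHom (holonomy N (c 0)) ≤ holonomy N (c 1) := by
      rw [holonomy, MonoidHom.map_mclosure]
      refine Submonoid.closure_le.2 ?_
      rintro x ⟨g, hg, rfl⟩
      exact conj_generator_mem hc hτ hτinv hg
    exact h2 ⟨f, hf, rfl⟩
  obtain ⟨ε, hε, φ, hφC, hφS, hφ0, hφd⟩ := hξ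
  refine ⟨ε, hε, fun t y => τ 1 (φ t (τinv y)), ?_, ?_, ?_, ?_⟩
  · have hin : ContDiff ℝ 1 (fun q : ℝ × Vec n => ((q.1, τinv q.2) : ℝ × Vec n)) :=
      contDiff_fst.prodMk (hτinv1.comp contDiff_snd)
    have hmaps : Set.MapsTo (fun q : ℝ × Vec n => ((q.1, τinv q.2) : ℝ × Vec n))
        ({t | |t| < ε} ×ˢ Set.univ) ({t | |t| < ε} ×ˢ Set.univ) :=
      fun q hq => ⟨hq.1, trivial⟩
    exact hτ1.comp_contDiffOn (hφC.comp hin.contDiffOn hmaps)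
  · intro t ht
    exact hconj _ (hφS t ht)
  · funext y; simp [hφ0, (hτinv y).2]
  · intro y
    have h1 : HasDerivAt (fun t => φ t (τinv y)) (ξ (τinv y)) 0 := hφd (τinv y)
    have h2 : HasFDerivAt (τ 1) (fderiv ℝ (τ 1) (τinv y)) ((fun t => φ t (τinv y)) 0) := by
      simp only [hφ0, id_eq]
      exact (hτ1.differentiable one_ne_zero (τinv y)).hasFDerivAt
    exact h2.comp_hasDerivAt (0:ℝ) h1
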